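/- arXiv:2505.07966 — 4 statements merged into one kernel-verified Lean document; each statement's English description precedes it below -/
import Mathlib

section
/- For every program of graded modal substitution calculus with global modality (GGMSC) of size n, there exists an equivalent GGMSC program in strong negation normal form (i.e., where the only negated subschemata are negated proposition symbols) of size O(n). -/
/-! ## Core: Kripke models, GGMSC schemata and programs -/

structure Kripke (W : Type) (P : Type) where
  R : W → W → Prop
  V : W → P → Prop

/-- Schemata of graded modal substitution calculus with the counting global
modality (GGMSC), over proposition symbols `P` and schema variables `T`.
`dia k` is `◇_{≥k}`, `box k` is `□_{<k}`, `gdia k` is `⟨E⟩_{≥k}` and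
`gbox k` is `[E]_{<k}`. -/
inductive Schema (P : Type) (T : Type) : Type where
  | bot | top
  | prop (p : P)
  | var (X : T)
  | neg (φ : Schema P T)
  | or (φ ψ : Schema P T)
  | and (φ ψ : Schema P T)
  | dia (k : ℕ) (φ : Schema P T)
  | box (k : ℕ) (φ : Schema P T)
  | gdia (k : ℕ) (φ : Schema P T)
  | gbox (k : ℕ) (φ : Schema P T)

/-- Formulae of graded modal logic with the counting global modality (GGML):
schemata with no schema variables. -/
abbrev GGFormula (P : Type) : Type := Schema P Empty

namespace Schema

def ofFormula {P T : Type} : GGFormula P → Schema P T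
  | .bot => .bot
  | .top => .top
  | .prop p => .prop p
  | .var X => X.elim
  | .neg φ => .neg (ofFormula φ)
  | .or φ ψ => .or (ofFormula φ) (ofFormula ψ)
  | .and φ ψ => .and (ofFormula φ) (ofFormula ψ)
  | .dia k φ => .dia k (ofFormula φ)
  | .box k φ => .box k (ofFormula φ)
  | .gdia k φ => .gdia k (ofFormula φ)
  | .gbox k φ => .gbox k (ofFormula φ)

/-- Truth of a `(P,T)`-schema in a Kripke model `M` at node `w`, where the
schema variables are interpreted by the labeling `g`. -/
def Sat {W P T : Type} (M : Kripke W P) (g : W → T → Prop) : W → Schema P T → Prop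
  | _, .bot => False
  | _, .top => True
  | w, .prop p => M.V w p
  | w, .var X => g w X
  | w, .neg φ => ¬ Sat M g w φ
  | w, .or φ ψ => Sat M g w φ ∨ Sat M g w ψ
  | w, .and φ ψ => Sat M g w φ ∧ Sat M g w ψ
  | w, .dia k φ => ∃ f : Fin k → W, Function.Injective f ∧ ∀ i, M.R w (f i) ∧ Sat M g (f i) φ
  | w, .box k φ => ¬ ∃ f : Fin k → W, Function.Injective f ∧ ∀ i, M.R w (f i) ∧ ¬ Sat M g (f i) φ
  | w, .gdia k φ => ∃ f : Fin k → W, Function.Injective f ∧ ∀ i, Sat M g (f i) φ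
  | w, .gbox k φ => ¬ ∃ f : Fin k → W, Function.Injective f ∧ ∀ i, ¬ Sat M g (f i) φ

/-- Size of a schema: the number of proposition symbols, schema variables,
negations and binary connectives, plus the counting thresholds of all
diamonds and boxes. -/
def size {P T : Type} : Schema P T → ℕ
  | .bot => 0
  | .top => 0
  | .prop _ => 1
  | .var _ => 1
  | .neg φ => size φ + 1
  | .or φ ψ => size φ + size ψ + 1
  | .and φ ψ => size φ + size ψ + 1
  | .dia k φ => size φ + k
  | .box k φ => size φ + k
  | .gdia k φ => size φ + k
  | .gbox k φ => size φ + k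

/-- Strong negation normal form: the only negated subschemata are negated
proposition symbols. -/
def SNNF {P T : Type} : Schema P T → Prop
  | .neg (.prop _) => True
  | .neg _ => False
  | .or φ ψ => SNNF φ ∧ SNNF ψ
  | .and φ ψ => SNNF φ ∧ SNNF ψ
  | .dia _ φ => SNNF φ
  | .box _ φ => SNNF φ
  | .gdia _ φ => SNNF φ
  | .gbox _ φ => SNNF φ
  | _ => True

/-- A schema of `MSC`: only non-graded local diamonds and boxes. -/
def IsMSC {P T : Type} : Schema P T → Prop
  | .neg φ => IsMSC φ
  | .or φ ψ => IsMSC φ ∧ IsMSC ψ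
  | .and φ ψ => IsMSC φ ∧ IsMSC ψ
  | .dia k φ => k = 1 ∧ IsMSC φ
  | .box k φ => k = 1 ∧ IsMSC φ
  | .gdia _ _ => False
  | .gbox _ _ => False
  | _ => True

/-- A schema of `SC`: no diamonds or boxes at all. -/
def IsSC {P T : Type} : Schema P T → Prop
  | .neg φ => IsSC φ
  | .or φ ψ => IsSC φ ∧ IsSC ψ
  | .and φ ψ => IsSC φ ∧ IsSC ψ
  | .dia _ _ => False
  | .box _ _ => False
  | .gdia _ _ => False
  | .gbox _ _ => False
  | _ => True

/-- Modal depth of a schema. -/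
def mdepth {P T : Type} : Schema P T → ℕ
  | .neg φ => mdepth φ
  | .or φ ψ => max (mdepth φ) (mdepth ψ)
  | .and φ ψ => max (mdepth φ) (mdepth ψ)
  | .dia _ φ => mdepth φ + 1
  | .box _ φ => mdepth φ + 1
  | .gdia _ φ => mdepth φ + 1
  | .gbox _ φ => mdepth φ + 1
  | _ => 0

end Schema

/-- A `(P,T)`-program of GGMSC: a base rule (a GGML formula) and an induction
rule (a schema) for each head predicate in `T`, together with a set of
accepting predicates. -/
structure Program (P : Type) (T : Type) where
  base : T → GGFormula P
  rule : T → Schema P T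
  acc : Set T

namespace Program

/-- `Λ.stage M n w X` holds iff `M, w ⊨ X^n`, i.e. the head predicate `X` is
true at `w` in round `n` of the run of `Λ` on `M`.  As a function of `w` and
`X` this is the global configuration of `Λ` in round `n`. -/
def stage {W P T : Type} (Λ : Program P T) (M : Kripke W P) : ℕ → W → T → Prop
  | 0 => fun w X => Schema.Sat M (fun _ (_ : T) => False) w (Schema.ofFormula (Λ.base X))
  | n + 1 => fun w X => Schema.Sat M (Λ.stage M n) w (Λ.rule X)

/-- `Λ` accepts the pointed model `(M,w)`: some accepting predicate becomes
true at `w` in some round. -/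
def Accepts {W P T : Type} (Λ : Program P T) (M : Kripke W P) (w : W) : Prop :=
  ∃ n : ℕ, ∃ X ∈ Λ.acc, Λ.stage M n w X

/-- The size of a program: the sum of the sizes of the bodies of all its rules. -/
def size {P T : Type} [Fintype T] (Λ : Program P T) : ℕ :=
  ∑ X : T, ((Λ.base X).size + (Λ.rule X).size)

/-- A program is in strong negation normal form if all the bodies of its rules are. -/
def SNNFP {P T : Type} (Λ : Program P T) : Prop :=
  ∀ X : T, (Λ.base X).SNNF ∧ (Λ.rule X).SNNF

/-- A program of `MSC`. -/
def IsMSCP {P T : Type} (Λ : Program P T) : Prop :=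
  ∀ X : T, (Λ.base X).IsMSC ∧ (Λ.rule X).IsMSC

/-- A program of `SC`. -/
def IsSCP {P T : Type} (Λ : Program P T) : Prop :=
  ∀ X : T, (Λ.base X).IsSC ∧ (Λ.rule X).IsSC

end Program

namespace Schema

/-- Negation normal form with a polarity flag: `nnf v b φ` is equivalent to
`φ` if `b = false` and to `¬φ` if `b = true`; variables are renamed by `v`
according to the polarity at which they occur. -/
def nnf {P T T' : Type} (v : Bool → T → T') : Bool → Schema P T → Schema P T'
  | b, .bot => bif b then .top else .bot
  | b, .top => bif b then .bot else .top
  | b, .prop p => bif b then .neg (.prop p) else .prop p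
  | b, .var X => .var (v b X)
  | b, .neg φ => nnf v (!b) φ
  | b, .or φ ψ => bif b then .and (nnf v b φ) (nnf v b ψ) else .or (nnf v b φ) (nnf v b ψ)
  | b, .and φ ψ => bif b then .or (nnf v b φ) (nnf v b ψ) else .and (nnf v b φ) (nnf v b ψ)
  | b, .dia k φ => bif b then .box k (nnf v b φ) else .dia k (nnf v b φ)
  | b, .box k φ => bif b then .dia k (nnf v b φ) else .box k (nnf v b φ)
  | b, .gdia k φ => bif b then .gbox k (nnf v b φ) else .gdia k (nnf v b φ)
  | b, .gbox k φ => bif b then .gdia k (nnf v b φ) else .gbox k (nnf v b φ)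

lemma nnf_snnf {P T T' : Type} (v : Bool → T → T') :
    ∀ (φ : Schema P T) (b : Bool), (nnf v b φ).SNNF := by
  intro φ
  induction φ with
  | bot => intro b; cases b <;> simp [nnf, SNNF]
  | top => intro b; cases b <;> simp [nnf, SNNF]
  | prop p => intro b; cases b <;> trivial
  | var X => intro b; cases b <;> simp [nnf, SNNF]
  | neg φ ih => intro b; simp only [nnf]; exact ih (!b)
  | or φ ψ ihφ ihψ => intro b; cases b <;> simp [nnf, SNNF] <;> exact ⟨ihφ _, ihψ _⟩
  | and φ ψ ihφ ihψ => intro b; cases b <;> simp [nnf, SNNF] <;> exact ⟨ihφ _, ihψ _⟩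
  | dia k φ ih => intro b; cases b <;> simpa [nnf, SNNF] using ih _
  | box k φ ih => intro b; cases b <;> simpa [nnf, SNNF] using ih _
  | gdia k φ ih => intro b; cases b <;> simpa [nnf, SNNF] using ih _
  | gbox k φ ih => intro b; cases b <;> simpa [nnf, SNNF] using ih _

lemma nnf_size {P T T' : Type} (v : Bool → T → T') :
    ∀ (φ : Schema P T) (b : Bool), (nnf v b φ).size ≤ 2 * φ.size := by
  intro φ
  induction φ with
  | bot => intro b; cases b <;> simp [nnf, size]
  | top => intro b; cases b <;> simp [nnf, size]
  | prop p => intro b; cases b <;> simp [nnf, size]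
  | var X => intro b; cases b <;> simp [nnf, size]
  | neg φ ih =>
      intro b; simp only [nnf, size]
      have := ih (!b); omega
  | or φ ψ ihφ ihψ =>
      intro b; cases b <;> simp only [nnf, cond, size] <;>
        · have := ihφ true; have := ihφ false
          have := ihψ true; have := ihψ false; omega
  | and φ ψ ihφ ihψ =>
      intro b; cases b <;> simp only [nnf, cond, size] <;>
        · have := ihφ true; have := ihφ false
          have := ihψ true; have := ihψ false; omega
  | dia k φ ih =>
      intro b; cases b <;> simp only [nnf, cond, size] <;>
        · have := ih true; have := ih false; omega
  | box k φ ih =>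
      intro b; cases b <;> simp only [nnf, cond, size] <;>
        · have := ih true; have := ih false; omega
  | gdia k φ ih =>
      intro b; cases b <;> simp only [nnf, cond, size] <;>
        · have := ih true; have := ih false; omega
  | gbox k φ ih =>
      intro b; cases b <;> simp only [nnf, cond, size] <;>
        · have := ih true; have := ih false; omega

lemma sat_nnf {W P T T' : Type} (M : Kripke W P) (v : Bool → T → T')
    (g : W → T → Prop) (g' : W → T' → Prop)
    (hv : ∀ w X, (g' w (v false X) ↔ g w X) ∧ (g' w (v true X) ↔ ¬ g w X)) :
    ∀ (φ : Schema P T) (b : Bool) (w : W),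
      Sat M g' w (nnf v b φ) ↔ (bif b then ¬ Sat M g w φ else Sat M g w φ) := by
  intro φ
  induction φ with
  | bot => intro b w; cases b <;> simp [nnf, Sat]
  | top => intro b w; cases b <;> simp [nnf, Sat]
  | prop p => intro b w; cases b <;> simp [nnf, Sat]
  | var X => intro b w; cases b <;> simp [nnf, Sat, (hv w X).1, (hv w X).2]
  | neg φ ih =>
      intro b w; cases b <;> simp only [nnf, cond, Sat] <;> rw [ih] <;> simp
  | or φ ψ ihφ ihψ =>
      intro b w; cases b <;> simp only [nnf, cond, Sat] <;> rw [ihφ, ihψ] <;> simp <;> tauto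
  | and φ ψ ihφ ihψ =>
      intro b w; cases b <;> simp only [nnf, cond, Sat] <;> rw [ihφ, ihψ] <;> simp <;> tauto
  | dia k φ ih =>
      intro b w
      have h0 : ∀ u, Sat M g' u (nnf v false φ) ↔ Sat M g u φ := fun u => ih false u
      have h1 : ∀ u, Sat M g' u (nnf v true φ) ↔ ¬ Sat M g u φ := fun u => ih true u
      cases b
      · simp only [nnf, cond, Sat, h0]
      · simp only [nnf, cond, Sat, h1, not_not]
  | box k φ ih =>
      intro b w
      have h0 : ∀ u, Sat M g' u (nnf v false φ) ↔ Sat M g u φ := fun u => ih false u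
      have h1 : ∀ u, Sat M g' u (nnf v true φ) ↔ ¬ Sat M g u φ := fun u => ih true u
      cases b
      · simp only [nnf, cond, Sat, h0]
      · simp only [nnf, cond, Sat, h1, not_not]
  | gdia k φ ih =>
      intro b w
      have h0 : ∀ u, Sat M g' u (nnf v false φ) ↔ Sat M g u φ := fun u => ih false u
      have h1 : ∀ u, Sat M g' u (nnf v true φ) ↔ ¬ Sat M g u φ := fun u => ih true u
      cases b
      · simp only [nnf, cond, Sat, h0]
      · simp only [nnf, cond, Sat, h1, not_not]
  | gbox k φ ih =>
      intro b w
      have h0 : ∀ u, Sat M g' u (nnf v false φ) ↔ Sat M g u φ := fun u => ih false u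
      have h1 : ∀ u, Sat M g' u (nnf v true φ) ↔ ¬ Sat M g u φ := fun u => ih true u
      cases b
      · simp only [nnf, cond, Sat, h0]
      · simp only [nnf, cond, Sat, h1, not_not]

lemma sat_ofFormula {W P T : Type} (M : Kripke W P) (g : W → T → Prop) :
    ∀ (ψ : GGFormula P) (w : W),
      Sat M g w (ofFormula ψ) ↔ Sat M (fun _ (_ : Empty) => False) w ψ := by
  intro ψ
  induction ψ with
  | bot => intro w; simp [ofFormula, Sat]
  | top => intro w; simp [ofFormula, Sat]
  | prop p => intro w; simp [ofFormula, Sat]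
  | var X => exact X.elim
  | neg φ ih => intro w; simp only [ofFormula, Sat]; rw [ih]
  | or φ ψ ihφ ihψ => intro w; simp only [ofFormula, Sat]; rw [ihφ, ihψ]
  | and φ ψ ihφ ihψ => intro w; simp only [ofFormula, Sat]; rw [ihφ, ihψ]
  | dia k φ ih => intro w; simp only [ofFormula, Sat]; simp only [ih]
  | box k φ ih => intro w; simp only [ofFormula, Sat]; simp only [ih]
  | gdia k φ ih => intro w; simp only [ofFormula, Sat]; simp only [ih]
  | gbox k φ ih => intro w; simp only [ofFormula, Sat]; simp only [ih]

end Schema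

/-- The dual-variable renaming used in the NNF program transformation. -/
def dualVar {T : Type} : Bool → T → T ⊕ T
  | false, X => Sum.inl X
  | true, X => Sum.inr X

/-- The NNF program: each predicate is duplicated, the copy computing the
complement. -/
def Program.nnfP {P T : Type} (Λ : Program P T) : Program P (T ⊕ T) where
  base Y := Sum.rec (fun X => Schema.nnf (fun _ (e : Empty) => e) false (Λ.base X))
                    (fun X => Schema.nnf (fun _ (e : Empty) => e) true (Λ.base X)) Y
  rule Y := Sum.rec (fun X => Schema.nnf dualVar false (Λ.rule X))
                    (fun X => Schema.nnf dualVar true (Λ.rule X)) Y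
  acc := Sum.inl '' Λ.acc

lemma stage_nnfP {W P T : Type} (Λ : Program P T) (M : Kripke W P) :
    ∀ (n : ℕ) (w : W) (X : T),
      (Λ.nnfP.stage M n w (Sum.inl X) ↔ Λ.stage M n w X) ∧
      (Λ.nnfP.stage M n w (Sum.inr X) ↔ ¬ Λ.stage M n w X) := by
  intro n
  induction n with
  | zero =>
      intro w X
      have hv : ∀ (w : W) (Y : Empty),
          ((fun _ (_ : Empty) => False) w ((fun _ (e : Empty) => e) false Y) ↔
            (fun _ (_ : Empty) => False) w Y) ∧
          ((fun _ (_ : Empty) => False) w ((fun _ (e : Empty) => e) true Y) ↔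
            ¬ (fun _ (_ : Empty) => False) w Y) := fun _ Y => Y.elim
      constructor
      · show Schema.Sat M _ w (Schema.ofFormula (Λ.nnfP.base (Sum.inl X))) ↔ _
        rw [Schema.sat_ofFormula]
        show Schema.Sat M _ w (Schema.nnf _ false (Λ.base X)) ↔ _
        rw [Schema.sat_nnf M _ (fun _ (_ : Empty) => False) _ hv]
        show Schema.Sat M _ w (Λ.base X) ↔ _
        rw [← Schema.sat_ofFormula M (fun _ (_ : T) => False)]
        rfl
      · show Schema.Sat M _ w (Schema.ofFormula (Λ.nnfP.base (Sum.inr X))) ↔ _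
        rw [Schema.sat_ofFormula]
        show Schema.Sat M _ w (Schema.nnf _ true (Λ.base X)) ↔ _
        rw [Schema.sat_nnf M _ (fun _ (_ : Empty) => False) _ hv]
        show ¬ Schema.Sat M _ w (Λ.base X) ↔ _
        rw [← Schema.sat_ofFormula M (fun _ (_ : T) => False)]
        rfl
  | succ n ih =>
      intro w X
      have hv : ∀ (w : W) (Y : T),
          (Λ.nnfP.stage M n w (dualVar false Y) ↔ Λ.stage M n w Y) ∧
          (Λ.nnfP.stage M n w (dualVar true Y) ↔ ¬ Λ.stage M n w Y) := by
        intro w Y; exact ⟨(ih w Y).1, (ih w Y).2⟩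
      constructor
      · show Schema.Sat M _ w (Schema.nnf dualVar false (Λ.rule X)) ↔ _
        rw [Schema.sat_nnf M dualVar (Λ.stage M n) _ hv]
        rfl
      · show Schema.Sat M _ w (Schema.nnf dualVar true (Λ.rule X)) ↔ _
        rw [Schema.sat_nnf M dualVar (Λ.stage M n) _ hv]
        rfl

/-- For every GGMSC program of size `n` there is an equivalent
GGMSC program in strong negation normal form of size `O(n)` (a single constant
`C` works uniformly for all programs). -/
theorem ggmsc_strong_negation_normal_form :
    ∃ C : ℕ, ∀ (P T : Type) (iT : Fintype T) (Λ : Program P T),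
      ∃ (T' : Type) (iT' : Fintype T') (Λ' : Program P T'),
        Λ'.SNNFP ∧
        @Program.size P T' iT' Λ' ≤ C * @Program.size P T iT Λ + C ∧
        ∀ (W : Type) (M : Kripke W P) (w : W), Λ.Accepts M w ↔ Λ'.Accepts M w := by
  refine ⟨4, fun P T iT Λ => ⟨T ⊕ T, inferInstance, Λ.nnfP, ?_, ?_, ?_⟩⟩
  · intro Y
    cases Y with
    | inl X => exact ⟨Schema.nnf_snnf _ _ _, Schema.nnf_snnf _ _ _⟩
    | inr X => exact ⟨Schema.nnf_snnf _ _ _, Schema.nnf_snnf _ _ _⟩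
  · have h : Λ.nnfP.size ≤ 2 * Λ.size + 2 * Λ.size := by
      rw [Program.size, Fintype.sum_sum_type, Program.size, Finset.mul_sum]
      refine Nat.add_le_add ?_ ?_ <;>
        refine Finset.sum_le_sum fun X _ => ?_ <;>
          · have h1 := Schema.nnf_size (fun _ (e : Empty) => e) (Λ.base X)
            have h2 := Schema.nnf_size (dualVar (T := T)) (Λ.rule X)
            have := h1 true; have := h1 false
            have := h2 true; have := h2 false
            simp only [Program.nnfP]
            omega
    have h' : Λ.size ≤ Λ.size := le_rfl
    omega
  · intro W M w
    constructor
    · rintro ⟨n, X, hX, hst⟩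
      exact ⟨n, Sum.inl X, ⟨X, hX, rfl⟩, (stage_nnfP Λ M n w X).1.2 hst⟩
    · rintro ⟨n, Y, ⟨X, hX, rfl⟩, hst⟩
      exact ⟨n, X, hX, (stage_nnfP Λ M n w X).1.1 hst⟩
end

section
/- For each pointed Kripke model (M,w) over Π and each Π-program Λ of GGMSC, Λ accepts (M,w) under the compositional (iteration) semantics if and only if Eloise has a winning strategy in the semantic game 𝒢(M,w,Λ). -/
/-! ## The semantic game 𝒢(M,w,Λ) for GGMSC

A position `(V, v, φ, ℓ)` of the game is encoded by `(b, v, φ, ℓ)` where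
`b = true` iff Eloise is the current verifier.  `EloiseWins Λ M b v φ ℓ`
says that Eloise has a winning strategy in the semantic game from this
position.  Since every play of the semantic game is finite, the inductive
definition below captures exactly the existence of a winning strategy. -/
inductive EloiseWins {W P T : Type} (Λ : Program P T) (M : Kripke W P) :
    Bool → W → Schema P T → ℕ → Prop where
  | top_v (w : W) (ℓ : ℕ) : EloiseWins Λ M true w .top ℓ
  | bot_f (w : W) (ℓ : ℕ) : EloiseWins Λ M false w .bot ℓ
  | prop_v (w : W) (p : P) (ℓ : ℕ) (h : M.V w p) : EloiseWins Λ M true w (.prop p) ℓ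
  | prop_f (w : W) (p : P) (ℓ : ℕ) (h : ¬ M.V w p) : EloiseWins Λ M false w (.prop p) ℓ
  | neg (b : Bool) (w : W) (φ : Schema P T) (ℓ : ℕ) (h : EloiseWins Λ M (!b) w φ ℓ) :
      EloiseWins Λ M b w (.neg φ) ℓ
  | and_v (w : W) (φ ψ : Schema P T) (ℓ : ℕ)
      (h1 : EloiseWins Λ M true w φ ℓ) (h2 : EloiseWins Λ M true w ψ ℓ) :
      EloiseWins Λ M true w (.and φ ψ) ℓ
  | and_f_left (w : W) (φ ψ : Schema P T) (ℓ : ℕ) (h : EloiseWins Λ M false w φ ℓ) :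
      EloiseWins Λ M false w (.and φ ψ) ℓ
  | and_f_right (w : W) (φ ψ : Schema P T) (ℓ : ℕ) (h : EloiseWins Λ M false w ψ ℓ) :
      EloiseWins Λ M false w (.and φ ψ) ℓ
  | or_v_left (w : W) (φ ψ : Schema P T) (ℓ : ℕ) (h : EloiseWins Λ M true w φ ℓ) :
      EloiseWins Λ M true w (.or φ ψ) ℓ
  | or_v_right (w : W) (φ ψ : Schema P T) (ℓ : ℕ) (h : EloiseWins Λ M true w ψ ℓ) :
      EloiseWins Λ M true w (.or φ ψ) ℓ
  | or_f (w : W) (φ ψ : Schema P T) (ℓ : ℕ)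
      (h1 : EloiseWins Λ M false w φ ℓ) (h2 : EloiseWins Λ M false w ψ ℓ) :
      EloiseWins Λ M false w (.or φ ψ) ℓ
  | dia_v (w : W) (k : ℕ) (φ : Schema P T) (ℓ : ℕ) (f : Fin k → W)
      (hinj : Function.Injective f) (hR : ∀ i, M.R w (f i))
      (h : ∀ i, EloiseWins Λ M true (f i) φ ℓ) : EloiseWins Λ M true w (.dia k φ) ℓ
  | dia_f (w : W) (k : ℕ) (φ : Schema P T) (ℓ : ℕ) (sel : (Fin k → W) → Fin k)
      (h : ∀ f : Fin k → W, Function.Injective f → (∀ i, M.R w (f i)) →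
        EloiseWins Λ M false (f (sel f)) φ ℓ) : EloiseWins Λ M false w (.dia k φ) ℓ
  | box_v (w : W) (k : ℕ) (φ : Schema P T) (ℓ : ℕ) (sel : (Fin k → W) → Fin k)
      (h : ∀ f : Fin k → W, Function.Injective f → (∀ i, M.R w (f i)) →
        EloiseWins Λ M true (f (sel f)) φ ℓ) : EloiseWins Λ M true w (.box k φ) ℓ
  | box_f (w : W) (k : ℕ) (φ : Schema P T) (ℓ : ℕ) (f : Fin k → W)
      (hinj : Function.Injective f) (hR : ∀ i, M.R w (f i))
      (h : ∀ i, EloiseWins Λ M false (f i) φ ℓ) : EloiseWins Λ M false w (.box k φ) ℓ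
  | gdia_v (w : W) (k : ℕ) (φ : Schema P T) (ℓ : ℕ) (f : Fin k → W)
      (hinj : Function.Injective f)
      (h : ∀ i, EloiseWins Λ M true (f i) φ ℓ) : EloiseWins Λ M true w (.gdia k φ) ℓ
  | gdia_f (w : W) (k : ℕ) (φ : Schema P T) (ℓ : ℕ) (sel : (Fin k → W) → Fin k)
      (h : ∀ f : Fin k → W, Function.Injective f →
        EloiseWins Λ M false (f (sel f)) φ ℓ) : EloiseWins Λ M false w (.gdia k φ) ℓ
  | gbox_v (w : W) (k : ℕ) (φ : Schema P T) (ℓ : ℕ) (sel : (Fin k → W) → Fin k)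
      (h : ∀ f : Fin k → W, Function.Injective f →
        EloiseWins Λ M true (f (sel f)) φ ℓ) : EloiseWins Λ M true w (.gbox k φ) ℓ
  | gbox_f (w : W) (k : ℕ) (φ : Schema P T) (ℓ : ℕ) (f : Fin k → W)
      (hinj : Function.Injective f)
      (h : ∀ i, EloiseWins Λ M false (f i) φ ℓ) : EloiseWins Λ M false w (.gbox k φ) ℓ
  | var_succ (b : Bool) (w : W) (X : T) (ℓ : ℕ)
      (h : EloiseWins Λ M b w (Λ.rule X) ℓ) : EloiseWins Λ M b w (.var X) (ℓ + 1)
  | var_zero (b : Bool) (w : W) (X : T)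
      (h : EloiseWins Λ M b w (Schema.ofFormula (Λ.base X)) 0) :
      EloiseWins Λ M b w (.var X) 0

/-- Eloise has a winning strategy in the semantic game `𝒢(M,w,Λ)`: she can
pick an initial position `(Eloise, w, φ, k)` where `φ` is the body of the base
rule or of the induction rule of an accepting predicate, and win from it. -/
def EloiseWinsGame {W P T : Type} (Λ : Program P T) (M : Kripke W P) (w : W) : Prop :=
  ∃ X ∈ Λ.acc, ∃ k : ℕ,
    EloiseWins Λ M true w (Schema.ofFormula (Λ.base X)) k ∨
    EloiseWins Λ M true w (Λ.rule X) k

section Aux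

variable {W P T : Type} (Λ : Program P T) (M : Kripke W P)

/-- Truth of a variable-free schema does not depend on the labeling. -/
lemma sat_ofFormula_congr (g g' : W → T → Prop) :
    ∀ (ψ : GGFormula P) (w : W),
      Schema.Sat M g w (Schema.ofFormula ψ) ↔ Schema.Sat M g' w (Schema.ofFormula ψ) := by
  intro ψ
  induction ψ with
  | bot => intro w; simp [Schema.ofFormula, Schema.Sat]
  | top => intro w; simp [Schema.ofFormula, Schema.Sat]
  | prop p => intro w; simp [Schema.ofFormula, Schema.Sat]
  | var X => exact X.elim
  | neg φ ih => intro w; simp [Schema.ofFormula, Schema.Sat, ih]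
  | or φ ψ ih1 ih2 => intro w; simp [Schema.ofFormula, Schema.Sat, ih1, ih2]
  | and φ ψ ih1 ih2 => intro w; simp [Schema.ofFormula, Schema.Sat, ih1, ih2]
  | dia k φ ih => intro w; simp [Schema.ofFormula, Schema.Sat, ih]
  | box k φ ih => intro w; simp [Schema.ofFormula, Schema.Sat, ih]
  | gdia k φ ih => intro w; simp [Schema.ofFormula, Schema.Sat, ih]
  | gbox k φ ih => intro w; simp [Schema.ofFormula, Schema.Sat, ih]

/-- Soundness: if Eloise wins from `(b, w, φ, ℓ)`, then `φ` is true at `w`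
with the variables interpreted by the stage-`ℓ` configuration iff `b = true`. -/
lemma win_sound {b : Bool} {w : W} {φ : Schema P T} {ℓ : ℕ}
    (h : EloiseWins Λ M b w φ ℓ) :
    Schema.Sat M (Λ.stage M ℓ) w φ ↔ b = true := by
  induction h with
  | top_v w ℓ => simp [Schema.Sat]
  | bot_f w ℓ => simp [Schema.Sat]
  | prop_v w p ℓ h => simpa [Schema.Sat] using h
  | prop_f w p ℓ h => simpa [Schema.Sat] using h
  | neg b w φ ℓ h ih => cases b <;> simp_all [Schema.Sat]
  | and_v w φ ψ ℓ h1 h2 ih1 ih2 => simp_all [Schema.Sat]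
  | and_f_left w φ ψ ℓ h ih => simp_all [Schema.Sat]
  | and_f_right w φ ψ ℓ h ih => simp_all [Schema.Sat]
  | or_v_left w φ ψ ℓ h ih => simp_all [Schema.Sat]
  | or_v_right w φ ψ ℓ h ih => simp_all [Schema.Sat]
  | or_f w φ ψ ℓ h1 h2 ih1 ih2 => simp_all [Schema.Sat]
  | dia_v w k φ ℓ f hinj hR h ih =>
      simp only [Schema.Sat, eq_self_iff_true, iff_true]
      exact ⟨f, hinj, fun i => ⟨hR i, (ih i).mpr rfl⟩⟩
  | dia_f w k φ ℓ sel h ih =>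
      simp only [Schema.Sat]
      constructor
      · rintro ⟨f, hinj, hf⟩
        exact absurd (hf (sel f)).2 (by simpa using (ih f hinj fun i => (hf i).1))
      · intro hb; cases hb
  | box_v w k φ ℓ sel h ih =>
      simp only [Schema.Sat, eq_self_iff_true, iff_true]
      rintro ⟨f, hinj, hf⟩
      exact absurd ((ih f hinj fun i => (hf i).1).mpr rfl) (hf (sel f)).2
  | box_f w k φ ℓ f hinj hR h ih =>
      simp only [Schema.Sat]
      constructor
      · intro hs; exact absurd ⟨f, hinj, fun i => ⟨hR i, by simpa using ih i⟩⟩ hs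
      · intro hb; cases hb
  | gdia_v w k φ ℓ f hinj h ih =>
      simp only [Schema.Sat, eq_self_iff_true, iff_true]
      exact ⟨f, hinj, fun i => (ih i).mpr rfl⟩
  | gdia_f w k φ ℓ sel h ih =>
      simp only [Schema.Sat]
      constructor
      · rintro ⟨f, hinj, hf⟩
        exact absurd (hf (sel f)) (by simpa using (ih f hinj))
      · intro hb; cases hb
  | gbox_v w k φ ℓ sel h ih =>
      simp only [Schema.Sat, eq_self_iff_true, iff_true]
      rintro ⟨f, hinj, hf⟩
      exact absurd ((ih f hinj).mpr rfl) (hf (sel f))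
  | gbox_f w k φ ℓ f hinj h ih =>
      simp only [Schema.Sat]
      constructor
      · intro hs; exact absurd ⟨f, hinj, fun i => by simpa using ih i⟩ hs
      · intro hb; cases hb
  | var_succ b w X ℓ h ih =>
      simpa [Schema.Sat, Program.stage] using ih
  | var_zero b w X h ih =>
      simp only [Schema.Sat, Program.stage]
      exact (sat_ofFormula_congr M _ _ (Λ.base X) w).trans ih

/-- Selector extraction. -/
lemma exists_sel {k : ℕ} (hk : 0 < k) (Q : (Fin k → W) → Prop)
    (R : (Fin k → W) → Fin k → Prop) (h : ∀ f, Q f → ∃ i, R f i) :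
    ∃ sel : (Fin k → W) → Fin k, ∀ f, Q f → R f (sel f) := by
  classical
  have h' : ∀ f, ∃ i, Q f → R f i := by
    intro f
    by_cases hq : Q f
    · obtain ⟨i, hi⟩ := h f hq; exact ⟨i, fun _ => hi⟩
    · exact ⟨⟨0, hk⟩, fun hq' => absurd hq' hq⟩
  choose sel hsel using h'
  exact ⟨sel, hsel⟩

/-- Completeness for a fixed labeling, given that the variable positions are
already handled. -/
lemma win_complete_aux (g : W → T → Prop) (ℓ : ℕ)
    (hvar : ∀ (X : T) (w : W),
      (g w X → EloiseWins Λ M true w (.var X) ℓ) ∧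
      (¬ g w X → EloiseWins Λ M false w (.var X) ℓ)) :
    ∀ (φ : Schema P T) (w : W),
      (Schema.Sat M g w φ → EloiseWins Λ M true w φ ℓ) ∧
      (¬ Schema.Sat M g w φ → EloiseWins Λ M false w φ ℓ) := by
  classical
  intro φ
  induction φ with
  | bot =>
      intro w
      exact ⟨fun h => h.elim, fun _ => .bot_f w ℓ⟩
  | top =>
      intro w
      exact ⟨fun _ => .top_v w ℓ, fun h => absurd trivial h⟩
  | prop p =>
      intro w
      exact ⟨fun h => .prop_v w p ℓ h, fun h => .prop_f w p ℓ h⟩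
  | var X => exact fun w => hvar X w
  | neg φ ih =>
      intro w
      refine ⟨fun h => .neg true w φ ℓ ((ih w).2 h), fun h => .neg false w φ ℓ ?_⟩
      exact (ih w).1 (not_not.mp h)
  | or φ ψ ih1 ih2 =>
      intro w
      constructor
      · intro h
        rcases h with h | h
        · exact .or_v_left w φ ψ ℓ ((ih1 w).1 h)
        · exact .or_v_right w φ ψ ℓ ((ih2 w).1 h)
      · intro h
        rw [show Schema.Sat M g w (.or φ ψ) = (Schema.Sat M g w φ ∨ Schema.Sat M g w ψ) from rfl] at h
        push_neg at h
        exact .or_f w φ ψ ℓ ((ih1 w).2 h.1) ((ih2 w).2 h.2)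
  | and φ ψ ih1 ih2 =>
      intro w
      constructor
      · intro h
        exact .and_v w φ ψ ℓ ((ih1 w).1 h.1) ((ih2 w).1 h.2)
      · intro h
        rw [show Schema.Sat M g w (.and φ ψ) = (Schema.Sat M g w φ ∧ Schema.Sat M g w ψ) from rfl] at h
        by_cases h1 : Schema.Sat M g w φ
        · exact .and_f_right w φ ψ ℓ ((ih2 w).2 fun h2 => h ⟨h1, h2⟩)
        · exact .and_f_left w φ ψ ℓ ((ih1 w).2 h1)
  | dia k φ ih =>
      intro w
      constructor
      · rintro ⟨f, hinj, hf⟩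
        exact .dia_v w k φ ℓ f hinj (fun i => (hf i).1) fun i => (ih (f i)).1 (hf i).2
      · intro h
        rcases Nat.eq_zero_or_pos k with rfl | hk
        · exact absurd ⟨Fin.elim0, fun a => a.elim0, fun i => i.elim0⟩ h
        · have hex : ∀ f : Fin k → W, (Function.Injective f ∧ ∀ i, M.R w (f i)) → ∃ i : Fin k, EloiseWins Λ M false (f i) φ ℓ := by
            rintro f ⟨hinj, hR⟩
            have : ¬ ∀ i, M.R w (f i) ∧ Schema.Sat M g (f i) φ :=
            fun hall => h ⟨f, hinj, hall⟩
            push_neg at this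
            obtain ⟨i, hi⟩ := this
            exact ⟨i, (ih (f i)).2 (hi (hR i))⟩
          obtain ⟨sel, hsel⟩ := exists_sel (W := W) hk _ _ hex
          exact .dia_f w k φ ℓ sel fun f hinj hR => hsel f ⟨hinj, hR⟩
  | box k φ ih =>
      intro w
      constructor
      · intro h
        rcases Nat.eq_zero_or_pos k with rfl | hk
        · exact absurd ⟨Fin.elim0, fun a => a.elim0, fun i => i.elim0⟩ h
        · have hex : ∀ f : Fin k → W, (Function.Injective f ∧ ∀ i, M.R w (f i)) → ∃ i : Fin k, EloiseWins Λ M true (f i) φ ℓ := by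
            rintro f ⟨hinj, hR⟩
            have : ¬ ∀ i, M.R w (f i) ∧ ¬ Schema.Sat M g (f i) φ :=
            fun hall => h ⟨f, hinj, hall⟩
            push_neg at this
            obtain ⟨i, hi⟩ := this
            exact ⟨i, (ih (f i)).1 (hi (hR i))⟩
          obtain ⟨sel, hsel⟩ := exists_sel (W := W) hk _ _ hex
          exact .box_v w k φ ℓ sel fun f hinj hR => hsel f ⟨hinj, hR⟩
      · intro h
        obtain ⟨f, hinj, hf⟩ := not_not.mp h
        exact .box_f w k φ ℓ f hinj (fun i => (hf i).1) fun i => (ih (f i)).2 (hf i).2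
  | gdia k φ ih =>
      intro w
      constructor
      · rintro ⟨f, hinj, hf⟩
        exact .gdia_v w k φ ℓ f hinj fun i => (ih (f i)).1 (hf i)
      · intro h
        rcases Nat.eq_zero_or_pos k with rfl | hk
        · exact absurd ⟨Fin.elim0, fun a => a.elim0, fun i => i.elim0⟩ h
        · have hex : ∀ f : Fin k → W, (Function.Injective f) → ∃ i : Fin k, EloiseWins Λ M false (f i) φ ℓ := by
            intro f hinj
            have : ¬ ∀ i, Schema.Sat M g (f i) φ := fun hall => h ⟨f, hinj, hall⟩
            push_neg at this
            obtain ⟨i, hi⟩ := this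
            exact ⟨i, (ih (f i)).2 hi⟩
          obtain ⟨sel, hsel⟩ := exists_sel (W := W) hk _ _ hex
          exact .gdia_f w k φ ℓ sel fun f hinj => hsel f hinj
  | gbox k φ ih =>
      intro w
      constructor
      · intro h
        rcases Nat.eq_zero_or_pos k with rfl | hk
        · exact absurd ⟨Fin.elim0, fun a => a.elim0, fun i => i.elim0⟩ h
        · have hex : ∀ f : Fin k → W, (Function.Injective f) → ∃ i : Fin k, EloiseWins Λ M true (f i) φ ℓ := by
            intro f hinj
            have : ¬ ∀ i, ¬ Schema.Sat M g (f i) φ := fun hall => h ⟨f, hinj, hall⟩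
            push_neg at this
            obtain ⟨i, hi⟩ := this
            exact ⟨i, (ih (f i)).1 hi⟩
          obtain ⟨sel, hsel⟩ := exists_sel (W := W) hk _ _ hex
          exact .gbox_v w k φ ℓ sel fun f hinj => hsel f hinj
      · intro h
        obtain ⟨f, hinj, hf⟩ := not_not.mp h
        exact .gbox_f w k φ ℓ f hinj fun i => (ih (f i)).2 (hf i)

/-- Completeness for variable-free schemata (with any labeling and counter). -/
lemma win_complete_ofFormula (g : W → T → Prop) (ℓ : ℕ) (ψ : GGFormula P) (w : W) :
    (Schema.Sat M g w (Schema.ofFormula ψ) →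
      EloiseWins Λ M true w (Schema.ofFormula ψ) ℓ) ∧
    (¬ Schema.Sat M g w (Schema.ofFormula ψ) →
      EloiseWins Λ M false w (Schema.ofFormula ψ) ℓ) := by
  induction ψ generalizing w with
  | bot => exact ⟨fun h => h.elim, fun _ => .bot_f w ℓ⟩
  | top => exact ⟨fun _ => .top_v w ℓ, fun h => absurd trivial h⟩
  | prop p => exact ⟨fun h => .prop_v w p ℓ h, fun h => .prop_f w p ℓ h⟩
  | var X => exact X.elim
  | neg ψ ih =>
      refine ⟨fun h => .neg true w _ ℓ ((ih w).2 h), fun h => .neg false w _ ℓ ?_⟩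
      exact (ih w).1 (not_not.mp h)
  | or φ ψ ih1 ih2 =>
      constructor
      · intro h
        rcases h with h | h
        · exact .or_v_left w _ _ ℓ ((ih1 w).1 h)
        · exact .or_v_right w _ _ ℓ ((ih2 w).1 h)
      · intro h
        rw [show Schema.Sat M g w (Schema.ofFormula (φ.or ψ)) =
            (Schema.Sat M g w (Schema.ofFormula φ) ∨ Schema.Sat M g w (Schema.ofFormula ψ))
            from rfl] at h
        push_neg at h
        exact .or_f w _ _ ℓ ((ih1 w).2 h.1) ((ih2 w).2 h.2)
  | and φ ψ ih1 ih2 =>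
      constructor
      · intro h
        exact .and_v w _ _ ℓ ((ih1 w).1 h.1) ((ih2 w).1 h.2)
      · intro h
        by_cases h1 : Schema.Sat M g w (Schema.ofFormula φ)
        · exact .and_f_right w _ _ ℓ ((ih2 w).2 fun h2 => h ⟨h1, h2⟩)
        · exact .and_f_left w _ _ ℓ ((ih1 w).2 h1)
  | dia k φ ih =>
      constructor
      · rintro ⟨f, hinj, hf⟩
        exact .dia_v w k _ ℓ f hinj (fun i => (hf i).1) fun i => (ih (f i)).1 (hf i).2
      · intro h
        rcases Nat.eq_zero_or_pos k with rfl | hk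
        · exact absurd ⟨Fin.elim0, fun a => a.elim0, fun i => i.elim0⟩ h
        · have hex : ∀ f : Fin k → W, (Function.Injective f ∧ ∀ i, M.R w (f i)) → ∃ i : Fin k, EloiseWins Λ M false (f i) (Schema.ofFormula φ) ℓ := by
            rintro f ⟨hinj, hR⟩
            have : ¬ ∀ i, M.R w (f i) ∧ Schema.Sat M g (f i) (Schema.ofFormula φ) :=
            fun hall => h ⟨f, hinj, hall⟩
            push_neg at this
            obtain ⟨i, hi⟩ := this
            exact ⟨i, (ih (f i)).2 (hi (hR i))⟩
          obtain ⟨sel, hsel⟩ := exists_sel (W := W) hk _ _ hex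
          exact .dia_f w k _ ℓ sel fun f hinj hR => hsel f ⟨hinj, hR⟩
  | box k φ ih =>
      constructor
      · intro h
        rcases Nat.eq_zero_or_pos k with rfl | hk
        · exact absurd ⟨Fin.elim0, fun a => a.elim0, fun i => i.elim0⟩ h
        · have hex : ∀ f : Fin k → W, (Function.Injective f ∧ ∀ i, M.R w (f i)) → ∃ i : Fin k, EloiseWins Λ M true (f i) (Schema.ofFormula φ) ℓ := by
            rintro f ⟨hinj, hR⟩
            have : ¬ ∀ i, M.R w (f i) ∧ ¬ Schema.Sat M g (f i) (Schema.ofFormula φ) :=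
            fun hall => h ⟨f, hinj, hall⟩
            push_neg at this
            obtain ⟨i, hi⟩ := this
            exact ⟨i, (ih (f i)).1 (hi (hR i))⟩
          obtain ⟨sel, hsel⟩ := exists_sel (W := W) hk _ _ hex
          exact .box_v w k _ ℓ sel fun f hinj hR => hsel f ⟨hinj, hR⟩
      · intro h
        obtain ⟨f, hinj, hf⟩ := not_not.mp h
        exact .box_f w k _ ℓ f hinj (fun i => (hf i).1) fun i => (ih (f i)).2 (hf i).2
  | gdia k φ ih =>
      constructor
      · rintro ⟨f, hinj, hf⟩
        exact .gdia_v w k _ ℓ f hinj fun i => (ih (f i)).1 (hf i)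
      · intro h
        rcases Nat.eq_zero_or_pos k with rfl | hk
        · exact absurd ⟨Fin.elim0, fun a => a.elim0, fun i => i.elim0⟩ h
        · have hex : ∀ f : Fin k → W, (Function.Injective f) → ∃ i : Fin k, EloiseWins Λ M false (f i) (Schema.ofFormula φ) ℓ := by
            intro f hinj
            have : ¬ ∀ i, Schema.Sat M g (f i) (Schema.ofFormula φ) :=
            fun hall => h ⟨f, hinj, hall⟩
            push_neg at this
            obtain ⟨i, hi⟩ := this
            exact ⟨i, (ih (f i)).2 hi⟩
          obtain ⟨sel, hsel⟩ := exists_sel (W := W) hk _ _ hex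
          exact .gdia_f w k _ ℓ sel fun f hinj => hsel f hinj
  | gbox k φ ih =>
      constructor
      · intro h
        rcases Nat.eq_zero_or_pos k with rfl | hk
        · exact absurd ⟨Fin.elim0, fun a => a.elim0, fun i => i.elim0⟩ h
        · have hex : ∀ f : Fin k → W, (Function.Injective f) → ∃ i : Fin k, EloiseWins Λ M true (f i) (Schema.ofFormula φ) ℓ := by
            intro f hinj
            have : ¬ ∀ i, ¬ Schema.Sat M g (f i) (Schema.ofFormula φ) :=
            fun hall => h ⟨f, hinj, hall⟩
            push_neg at this
            obtain ⟨i, hi⟩ := this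
            exact ⟨i, (ih (f i)).1 hi⟩
          obtain ⟨sel, hsel⟩ := exists_sel (W := W) hk _ _ hex
          exact .gbox_v w k _ ℓ sel fun f hinj => hsel f hinj
      · intro h
        obtain ⟨f, hinj, hf⟩ := not_not.mp h
        exact .gbox_f w k _ ℓ f hinj fun i => (ih (f i)).2 (hf i)

/-- Completeness: truth at stage `ℓ` yields a winning strategy with counter `ℓ`. -/
lemma win_complete : ∀ (ℓ : ℕ) (φ : Schema P T) (w : W),
    (Schema.Sat M (Λ.stage M ℓ) w φ → EloiseWins Λ M true w φ ℓ) ∧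
    (¬ Schema.Sat M (Λ.stage M ℓ) w φ → EloiseWins Λ M false w φ ℓ) := by
  intro ℓ
  induction ℓ with
  | zero =>
      refine win_complete_aux Λ M _ 0 ?_
      intro X w
      constructor
      · intro h
        exact .var_zero true w X
          ((win_complete_ofFormula Λ M (fun _ _ => (False : Prop)) 0 (Λ.base X) w).1 h)
      · intro h
        exact .var_zero false w X
          ((win_complete_ofFormula Λ M (fun _ _ => (False : Prop)) 0 (Λ.base X) w).2 h)
  | succ n ih =>
      refine win_complete_aux Λ M _ (n + 1) ?_
      intro X w
      constructor
      · intro h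
        exact .var_succ true w X n ((ih (Λ.rule X) w).1 h)
      · intro h
        exact .var_succ false w X n ((ih (Λ.rule X) w).2 h)

end Aux

/-- For each pointed Kripke model `(M,w)` and each GGMSC
program `Λ`, `Λ` accepts `(M,w)` under the compositional iteration semantics
iff Eloise has a winning strategy in the semantic game `𝒢(M,w,Λ)`. -/
theorem ggmsc_semantic_game_correct {W P T : Type} (Λ : Program P T)
    (M : Kripke W P) (w : W) :
    Λ.Accepts M w ↔ EloiseWinsGame Λ M w := by
  constructor
  · rintro ⟨n, X, hX, hst⟩
    refine ⟨X, hX, ?_⟩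
    cases n with
    | zero =>
        have hst' : Schema.Sat M (fun _ (_ : T) => False) w
            (Schema.ofFormula (Λ.base X)) := hst
        exact ⟨0, Or.inl ((win_complete_ofFormula Λ M
          (fun _ (_ : T) => False) 0 (Λ.base X) w).1 hst')⟩
    | succ n =>
        have hst' : Schema.Sat M (Λ.stage M n) w (Λ.rule X) := hst
        exact ⟨n, Or.inr ((win_complete Λ M n (Λ.rule X) w).1 hst')⟩
  · rintro ⟨X, hX, k, h | h⟩
    · have hs := (win_sound Λ M h).mpr rfl
      have hs0 : Schema.Sat M (fun _ (_ : T) => False) w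
          (Schema.ofFormula (Λ.base X)) :=
        (sat_ofFormula_congr M _ _ (Λ.base X) w).mp hs
      exact ⟨0, X, hX, hs0⟩
    · have hs := (win_sound Λ M h).mpr rfl
      exact ⟨k + 1, X, hX, hs⟩
end

section
/- The key inductive lemma for semantic game correctness: for every subschema ψ of a GGMSC program Λ, every pointed model (M,w) and every k∈ℕ, M,w ⊨ ψ^k (the k-th iterated formula of ψ) if and only if Eloise has a winning strategy in the semantic game 𝒢(M,w,Λ) starting from the position (Eloise, w, ψ, k). -/
section Aux

open Schema

variable {W P T : Type} (Λ : Program P T) (M : Kripke W P)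

/-- Free schema variables of a schema. -/
def Schema.fv {P T : Type} : Schema P T → Set T
  | .var X => {X}
  | .neg φ => Schema.fv φ
  | .or φ ψ => Schema.fv φ ∪ Schema.fv ψ
  | .and φ ψ => Schema.fv φ ∪ Schema.fv ψ
  | .dia _ φ => Schema.fv φ
  | .box _ φ => Schema.fv φ
  | .gdia _ φ => Schema.fv φ
  | .gbox _ φ => Schema.fv φ
  | _ => ∅

lemma Schema.fv_ofFormula {P T : Type} (φ : GGFormula P) :
    ∀ X : T, X ∉ Schema.fv (Schema.ofFormula φ) := by
  induction φ with
  | var X => exact X.elim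
  | bot => simp [ofFormula, Schema.fv]
  | top => simp [ofFormula, Schema.fv]
  | prop p => simp [ofFormula, Schema.fv]
  | neg φ ih => simpa [ofFormula, Schema.fv] using ih
  | or φ ψ ih1 ih2 =>
      intro X hX
      rcases hX with h | h
      · exact ih1 X h
      · exact ih2 X h
  | and φ ψ ih1 ih2 =>
      intro X hX
      rcases hX with h | h
      · exact ih1 X h
      · exact ih2 X h
  | dia k φ ih => simpa [ofFormula, Schema.fv] using ih
  | box k φ ih => simpa [ofFormula, Schema.fv] using ih
  | gdia k φ ih => simpa [ofFormula, Schema.fv] using ih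
  | gbox k φ ih => simpa [ofFormula, Schema.fv] using ih

/-- Core selector lemma: a selecting strategy exists iff there is no
"bad" tuple. -/
lemma sel_iff {W : Type} {k : ℕ} (cond : (Fin k → W) → Prop) (Q : W → Prop)
    (hc0 : k = 0 → ∀ f : Fin k → W, cond f) :
    (∃ sel : (Fin k → W) → Fin k, ∀ f, cond f → Q (f (sel f))) ↔
      ¬ ∃ f : Fin k → W, cond f ∧ ∀ i, ¬ Q (f i) := by
  classical
  constructor
  · rintro ⟨sel, hsel⟩ ⟨f, hcf, hq⟩
    exact hq _ (hsel f hcf)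
  · intro h
    rcases Nat.eq_zero_or_pos k with hk | hk
    · exfalso
      subst hk
      exact h ⟨fun i => i.elim0, hc0 rfl _, fun i => i.elim0⟩
    · have hex : ∀ f : Fin k → W, cond f → ∃ i, Q (f i) := by
        intro f hcf
        by_contra hno
        push_neg at hno
        exact h ⟨f, hcf, hno⟩
      refine ⟨fun f => if hcf : cond f then (hex f hcf).choose else ⟨0, hk⟩, ?_⟩
      intro f hcf
      simp only [dif_pos hcf]
      exact (hex f hcf).choose_spec

/-- Main auxiliary lemma: given that the variable positions occurring in `ψ`
behave according to `g`, the game from `ψ` is equivalent to satisfaction. -/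
lemma main_aux (ℓ : ℕ) (g : W → T → Prop) :
    ∀ ψ : Schema P T,
      (∀ X ∈ Schema.fv ψ, ∀ v : W,
        (EloiseWins Λ M true v (.var X) ℓ ↔ g v X) ∧
        (EloiseWins Λ M false v (.var X) ℓ ↔ ¬ g v X)) →
      ∀ v : W,
        (EloiseWins Λ M true v ψ ℓ ↔ Schema.Sat M g v ψ) ∧
        (EloiseWins Λ M false v ψ ℓ ↔ ¬ Schema.Sat M g v ψ) := by
  intro ψ
  induction ψ with
  | bot =>
      intro _ v
      refine ⟨⟨fun h => (nomatch h), fun h => h.elim⟩, ⟨fun _ h => h, fun _ => .bot_f v ℓ⟩⟩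
  | top =>
      intro _ v
      refine ⟨⟨fun _ => trivial, fun _ => .top_v v ℓ⟩,
        ⟨fun h => (nomatch h), fun h => (h trivial).elim⟩⟩
  | prop p =>
      intro _ v
      refine ⟨⟨fun h => ?_, fun h => .prop_v v p ℓ h⟩,
        ⟨fun h => ?_, fun h => .prop_f v p ℓ h⟩⟩
      · cases h with | prop_v _ _ _ h => exact h
      · cases h with | prop_f _ _ _ h => exact h
  | var X =>
      intro hv v
      exact hv X (by simp [Schema.fv]) v
  | neg φ ih =>
      intro hv v
      have IH := ih (fun X hX => hv X (by simpa [Schema.fv] using hX))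
      refine ⟨⟨fun h => ?_, fun h => .neg true v φ ℓ (((IH v).2).mpr h)⟩,
        ⟨fun h => ?_, fun h => .neg false v φ ℓ (((IH v).1).mpr (not_not.mp h))⟩⟩
      · cases h with | neg _ _ _ _ h => exact ((IH v).2).mp h
      · cases h with | neg _ _ _ _ h => exact not_not_intro (((IH v).1).mp h)
  | or φ ψ ih1 ih2 =>
      intro hv v
      have IH1 := ih1 (fun X hX => hv X (Or.inl hX))
      have IH2 := ih2 (fun X hX => hv X (Or.inr hX))
      constructor
      · constructor
        · intro h
          cases h with
          | or_v_left _ _ _ _ h => exact Or.inl (((IH1 v).1).mp h)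
          | or_v_right _ _ _ _ h => exact Or.inr (((IH2 v).1).mp h)
        · rintro (h | h)
          · exact .or_v_left v φ ψ ℓ (((IH1 v).1).mpr h)
          · exact .or_v_right v φ ψ ℓ (((IH2 v).1).mpr h)
      · constructor
        · intro h
          cases h with
          | or_f _ _ _ _ h1 h2 =>
              rintro (hs | hs)
              · exact ((IH1 v).2).mp h1 hs
              · exact ((IH2 v).2).mp h2 hs
        · intro h
          have h' : ¬ (Schema.Sat M g v φ ∨ Schema.Sat M g v ψ) := h
          rw [not_or] at h'
          exact .or_f v φ ψ ℓ (((IH1 v).2).mpr h'.1) (((IH2 v).2).mpr h'.2)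
  | and φ ψ ih1 ih2 =>
      intro hv v
      have IH1 := ih1 (fun X hX => hv X (Or.inl hX))
      have IH2 := ih2 (fun X hX => hv X (Or.inr hX))
      constructor
      · constructor
        · intro h
          cases h with
          | and_v _ _ _ _ h1 h2 => exact ⟨((IH1 v).1).mp h1, ((IH2 v).1).mp h2⟩
        · rintro ⟨h1, h2⟩
          exact .and_v v φ ψ ℓ (((IH1 v).1).mpr h1) (((IH2 v).1).mpr h2)
      · constructor
        · intro h
          cases h with
          | and_f_left _ _ _ _ h => exact fun hs => ((IH1 v).2).mp h hs.1
          | and_f_right _ _ _ _ h => exact fun hs => ((IH2 v).2).mp h hs.2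
        · intro h
          rcases not_and_or.mp h with h | h
          · exact .and_f_left v φ ψ ℓ (((IH1 v).2).mpr h)
          · exact .and_f_right v φ ψ ℓ (((IH2 v).2).mpr h)
  | dia k φ ih =>
      intro hv v
      have IH := ih (fun X hX => hv X (by simpa [Schema.fv] using hX))
      have hc0 : k = 0 → ∀ f : Fin k → W,
          Function.Injective f ∧ ∀ i, M.R v (f i) := by
        intro hk; subst hk
        exact fun f => ⟨fun a => a.elim0, fun i => i.elim0⟩
      have hsel := sel_iff (fun f : Fin k → W => Function.Injective f ∧ ∀ i, M.R v (f i))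
        (fun x => ¬ Schema.Sat M g x φ) hc0
      constructor
      · constructor
        · intro h
          cases h with
          | dia_v _ _ _ _ f hinj hR h =>
              exact ⟨f, hinj, fun i => ⟨hR i, ((IH (f i)).1).mp (h i)⟩⟩
        · rintro ⟨f, hinj, hi⟩
          exact .dia_v v k φ ℓ f hinj (fun i => (hi i).1)
            (fun i => ((IH (f i)).1).mpr (hi i).2)
      · constructor
        · intro h
          cases h with
          | dia_f _ _ _ _ sel hs =>
              have h2 := hsel.mp ⟨sel, fun f hc => ((IH _).2).mp (hs f hc.1 hc.2)⟩
              rintro ⟨f, hinj, hi⟩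
              exact h2 ⟨f, ⟨hinj, fun i => (hi i).1⟩, fun i => not_not_intro (hi i).2⟩
        · intro hns
          have h2 : ¬ ∃ f : Fin k → W,
              (Function.Injective f ∧ ∀ i, M.R v (f i)) ∧
                ∀ i, ¬ ¬ Schema.Sat M g (f i) φ := by
            rintro ⟨f, ⟨hinj, hR⟩, hi⟩
            exact hns ⟨f, hinj, fun i => ⟨hR i, not_not.mp (hi i)⟩⟩
          obtain ⟨sel, hs⟩ := hsel.mpr h2
          exact .dia_f v k φ ℓ sel (fun f hinj hR => ((IH _).2).mpr (hs f ⟨hinj, hR⟩))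
  | box k φ ih =>
      intro hv v
      have IH := ih (fun X hX => hv X (by simpa [Schema.fv] using hX))
      have hc0 : k = 0 → ∀ f : Fin k → W,
          Function.Injective f ∧ ∀ i, M.R v (f i) := by
        intro hk; subst hk
        exact fun f => ⟨fun a => a.elim0, fun i => i.elim0⟩
      have hsel := sel_iff (fun f : Fin k → W => Function.Injective f ∧ ∀ i, M.R v (f i))
        (fun x => Schema.Sat M g x φ) hc0
      constructor
      · constructor
        · intro h
          cases h with
          | box_v _ _ _ _ sel hs =>
              have h2 := hsel.mp ⟨sel, fun f hc => ((IH _).1).mp (hs f hc.1 hc.2)⟩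
              rintro ⟨f, hinj, hi⟩
              exact h2 ⟨f, ⟨hinj, fun i => (hi i).1⟩, fun i => (hi i).2⟩
        · intro hns
          have h2 : ¬ ∃ f : Fin k → W,
              (Function.Injective f ∧ ∀ i, M.R v (f i)) ∧
                ∀ i, ¬ Schema.Sat M g (f i) φ := by
            rintro ⟨f, ⟨hinj, hR⟩, hi⟩
            exact hns ⟨f, hinj, fun i => ⟨hR i, hi i⟩⟩
          obtain ⟨sel, hs⟩ := hsel.mpr h2
          exact .box_v v k φ ℓ sel (fun f hinj hR => ((IH _).1).mpr (hs f ⟨hinj, hR⟩))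
      · constructor
        · intro h
          cases h with
          | box_f _ _ _ _ f hinj hR h =>
              exact not_not_intro ⟨f, hinj, fun i => ⟨hR i, ((IH (f i)).2).mp (h i)⟩⟩
        · intro h
          obtain ⟨f, hinj, hi⟩ := not_not.mp h
          exact .box_f v k φ ℓ f hinj (fun i => (hi i).1)
            (fun i => ((IH (f i)).2).mpr (hi i).2)
  | gdia k φ ih =>
      intro hv v
      have IH := ih (fun X hX => hv X (by simpa [Schema.fv] using hX))
      have hc0 : k = 0 → ∀ f : Fin k → W, Function.Injective f := by
        intro hk; subst hk
        exact fun f a => a.elim0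
      have hsel := sel_iff (fun f : Fin k → W => Function.Injective f)
        (fun x => ¬ Schema.Sat M g x φ) hc0
      constructor
      · constructor
        · intro h
          cases h with
          | gdia_v _ _ _ _ f hinj h =>
              exact ⟨f, hinj, fun i => ((IH (f i)).1).mp (h i)⟩
        · rintro ⟨f, hinj, hi⟩
          exact .gdia_v v k φ ℓ f hinj (fun i => ((IH (f i)).1).mpr (hi i))
      · constructor
        · intro h
          cases h with
          | gdia_f _ _ _ _ sel hs =>
              have h2 := hsel.mp ⟨sel, fun f hc => ((IH _).2).mp (hs f hc)⟩
              rintro ⟨f, hinj, hi⟩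
              exact h2 ⟨f, hinj, fun i => not_not_intro (hi i)⟩
        · intro hns
          have h2 : ¬ ∃ f : Fin k → W,
              Function.Injective f ∧ ∀ i, ¬ ¬ Schema.Sat M g (f i) φ := by
            rintro ⟨f, hinj, hi⟩
            exact hns ⟨f, hinj, fun i => not_not.mp (hi i)⟩
          obtain ⟨sel, hs⟩ := hsel.mpr h2
          exact .gdia_f v k φ ℓ sel (fun f hinj => ((IH _).2).mpr (hs f hinj))
  | gbox k φ ih =>
      intro hv v
      have IH := ih (fun X hX => hv X (by simpa [Schema.fv] using hX))
      have hc0 : k = 0 → ∀ f : Fin k → W, Function.Injective f := by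
        intro hk; subst hk
        exact fun f a => a.elim0
      have hsel := sel_iff (fun f : Fin k → W => Function.Injective f)
        (fun x => Schema.Sat M g x φ) hc0
      constructor
      · constructor
        · intro h
          cases h with
          | gbox_v _ _ _ _ sel hs =>
              have h2 := hsel.mp ⟨sel, fun f hc => ((IH _).1).mp (hs f hc)⟩
              rintro ⟨f, hinj, hi⟩
              exact h2 ⟨f, hinj, hi⟩
        · intro hns
          have h2 : ¬ ∃ f : Fin k → W,
              Function.Injective f ∧ ∀ i, ¬ Schema.Sat M g (f i) φ := by
            rintro ⟨f, hinj, hi⟩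
            exact hns ⟨f, hinj, hi⟩
          obtain ⟨sel, hs⟩ := hsel.mpr h2
          exact .gbox_v v k φ ℓ sel (fun f hinj => ((IH _).1).mpr (hs f hinj))
      · constructor
        · intro h
          cases h with
          | gbox_f _ _ _ _ f hinj h =>
              exact not_not_intro ⟨f, hinj, fun i => ((IH (f i)).2).mp (h i)⟩
        · intro h
          obtain ⟨f, hinj, hi⟩ := not_not.mp h
          exact .gbox_f v k φ ℓ f hinj (fun i => ((IH (f i)).2).mpr (hi i))

/-- The combined key lemma, for both polarities and all counters. -/
lemma key_all : ∀ (k : ℕ) (ψ : Schema P T) (w : W),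
    (EloiseWins Λ M true w ψ k ↔ Schema.Sat M (Λ.stage M k) w ψ) ∧
    (EloiseWins Λ M false w ψ k ↔ ¬ Schema.Sat M (Λ.stage M k) w ψ) := by
  intro k
  induction k with
  | zero =>
      have pure : ∀ (φ : GGFormula P) (v : W),
          (EloiseWins Λ M true v (Schema.ofFormula φ) 0 ↔
            Schema.Sat M (fun _ (_ : T) => False) v (Schema.ofFormula φ)) ∧
          (EloiseWins Λ M false v (Schema.ofFormula φ) 0 ↔
            ¬ Schema.Sat M (fun _ (_ : T) => False) v (Schema.ofFormula φ)) :=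
        fun φ v => main_aux Λ M 0 (fun _ _ => False) (Schema.ofFormula φ)
          (fun X hX => absurd hX (Schema.fv_ofFormula φ X)) v
      intro ψ w
      refine main_aux Λ M 0 (Λ.stage M 0) ψ ?_ w
      intro X _ v
      constructor
      · constructor
        · intro h
          cases h with
          | var_zero _ _ _ h => exact ((pure _ v).1).mp h
        · intro h
          exact .var_zero true v X (((pure _ v).1).mpr h)
      · constructor
        · intro h
          cases h with
          | var_zero _ _ _ h => exact ((pure _ v).2).mp h
        · intro h
          exact .var_zero false v X (((pure _ v).2).mpr h)
  | succ k ihk =>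
      intro ψ w
      refine main_aux Λ M (k + 1) (Λ.stage M (k + 1)) ψ ?_ w
      intro X _ v
      constructor
      · constructor
        · intro h
          cases h with
          | var_succ _ _ _ _ h => exact ((ihk (Λ.rule X) v).1).mp h
        · intro h
          exact .var_succ true v X k (((ihk (Λ.rule X) v).1).mpr h)
      · constructor
        · intro h
          cases h with
          | var_succ _ _ _ _ h => exact ((ihk (Λ.rule X) v).2).mp h
        · intro h
          exact .var_succ false v X k (((ihk (Λ.rule X) v).2).mpr h)

end Aux

/-- Key inductive lemma for semantic game correctness: for
every subschema `ψ` of a GGMSC program `Λ`, every pointed model `(M,w)` and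
every `k`, we have `M,w ⊨ ψ^k` (i.e. `ψ` holds at `w` when the schema
variables are interpreted by the round-`k` global configuration, which is the
semantics of the `k`-th iterated formula of `ψ`) iff Eloise has a winning
strategy in `𝒢(M,w,Λ)` from the position `(Eloise, w, ψ, k)`. -/
theorem ggmsc_semantic_game_key_lemma {W P T : Type} (Λ : Program P T)
    (M : Kripke W P) (ψ : Schema P T) (w : W) (k : ℕ) :
    Schema.Sat M (Λ.stage M k) w ψ ↔ EloiseWins Λ M true w ψ k :=
  ((key_all Λ M k ψ w).1).symm
end

section
/- The MSC program with rules X(0) :- □⊥ and X :- ◇X ∧ □X, with accepting predicate X, accepts a pointed Kripke model (M,w) if and only if (M,w) has the centre-point property: there exists n ∈ ℕ such that every walk starting from w reaches, in exactly n steps, a node with no successors. -/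
/-- The MSC program `X(0) :- □⊥`, `X :- ◇X ∧ □X` with accepting predicate `X`.
Here `□⊥` is `□_{<1}⊥`, `◇` is `◇_{≥1}` and `□` is `□_{<1}`. -/
def centreProgram (P : Type) : Program P Unit where
  base := fun _ => .box 1 .bot
  rule := fun _ => .and (.dia 1 (.var ())) (.box 1 (.var ()))
  acc := Set.univ

/-- The centre-point property: there is an `n` such that a walk of length `m`
starting at `w` ends in a node with no successors iff `m = n`; i.e. every
(maximal) walk starting from `w` leads to a dead-end in exactly `n` steps. -/
def CentrePoint {W P : Type} (M : Kripke W P) (w : W) : Prop :=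
  ∃ n : ℕ, ∀ (m : ℕ) (v : ℕ → W), v 0 = w → (∀ i < m, M.R (v i) (v (i + 1))) →
    ((∀ u : W, ¬ M.R (v m) u) ↔ m = n)

namespace CentreAux

variable {W P : Type} (M : Kripke W P)

/-- The walk condition with parameter `n`. -/
def Walks (M : Kripke W P) (n : ℕ) (w : W) : Prop :=
  ∀ (m : ℕ) (v : ℕ → W), v 0 = w → (∀ i < m, M.R (v i) (v (i + 1))) →
    ((∀ u : W, ¬ M.R (v m) u) ↔ m = n)

lemma stage_zero (w : W) :
    (centreProgram P).stage M 0 w () ↔ ∀ u, ¬ M.R w u := by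
  show Schema.Sat _ _ _ _ ↔ _
  simp only [centreProgram, Schema.ofFormula, Schema.Sat]
  constructor
  · intro h u hu
    exact h ⟨fun _ => u, fun a b _ => Subsingleton.elim a b,
      fun _ => ⟨hu, not_false⟩⟩
  · rintro h ⟨f, _, hf⟩
    exact h (f 0) (hf 0).1

lemma stage_succ (n : ℕ) (w : W) :
    (centreProgram P).stage M (n+1) w () ↔
      (∃ u, M.R w u) ∧ ∀ u, M.R w u → (centreProgram P).stage M n u () := by
  show Schema.Sat _ _ _ _ ↔ _
  simp only [centreProgram, Schema.Sat]
  constructor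
  · rintro ⟨⟨f, _, hf⟩, hbox⟩
    refine ⟨⟨f 0, (hf 0).1⟩, fun u hu => ?_⟩
    by_contra hns
    exact hbox ⟨fun _ => u, fun a b _ => Subsingleton.elim a b,
      fun _ => ⟨hu, hns⟩⟩
  · rintro ⟨⟨u, hu⟩, hall⟩
    refine ⟨⟨fun _ => u, fun a b _ => Subsingleton.elim a b,
      fun _ => ⟨hu, hall u hu⟩⟩, ?_⟩
    rintro ⟨f, _, hf⟩
    exact (hf 0).2 (hall (f 0) (hf 0).1)

lemma stage_iff_walks (n : ℕ) :
    ∀ w : W, (centreProgram P).stage M n w () ↔ Walks M n w := by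
  induction n with
  | zero =>
    intro w
    rw [stage_zero]
    constructor
    · intro h m v h0 hw
      cases m with
      | zero =>
        constructor
        · intro _; rfl
        · intro _ u hu
          exact h u (h0 ▸ hu)
      | succ k =>
        exact absurd (hw 0 (Nat.succ_pos k)) (h0 ▸ h (v 1))
    · intro h
      exact (h 0 (fun _ => w) rfl (fun i hi => absurd hi (Nat.not_lt_zero i))).2 rfl
  | succ n ih =>
    intro w
    rw [stage_succ]
    constructor
    · rintro ⟨⟨u0, hu0⟩, hall⟩ m v h0 hw
      cases m with
      | zero =>
        constructor
        · intro h; exact absurd (h0 ▸ hu0) (h u0)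
        · intro h; exact absurd h (Nat.succ_ne_zero n).symm
      | succ k =>
        have h1 : M.R w (v 1) := h0 ▸ hw 0 (Nat.succ_pos k)
        have hst : (centreProgram P).stage M n (v 1) () := hall _ h1
        have hwk := (ih (v 1)).mp hst k (fun i => v (i + 1)) rfl
          (fun i hi => hw (i + 1) (by omega))
        rw [hwk]
        omega
    · intro h
      have h0 := h 0 (fun _ => w) rfl (fun i hi => absurd hi (Nat.not_lt_zero i))
      have hsucc : ∃ u, M.R w u := by
        by_contra hns
        push_neg at hns
        exact (Nat.succ_ne_zero n).symm (h0.mp hns)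
      refine ⟨hsucc, fun u hu => ?_⟩
      refine (ih u).mpr ?_
      intro m v' h0' hw'
      set v : ℕ → W := fun i => match i with | 0 => w | i+1 => v' i with hv
      have hwalk : ∀ i < m + 1, M.R (v i) (v (i + 1)) := by
        intro i hi
        match i with
        | 0 => show M.R w (v' 0); rw [h0']; exact hu
        | j+1 => exact hw' j (by omega)
      have := h (m + 1) v rfl hwalk
      simpa using this

end CentreAux

/-- The MSC program `X(0) :- □⊥`, `X :- ◇X ∧ □X` accepts a
pointed Kripke model `(M,w)` iff `(M,w)` has the centre-point property. -/
theorem centre_program_accepts_iff_centre_point {W P : Type}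
    (M : Kripke W P) (w : W) :
    (centreProgram P).Accepts M w ↔ CentrePoint M w := by
  constructor
  · rintro ⟨n, X, -, hst⟩
    exact ⟨n, (CentreAux.stage_iff_walks M n w).mp hst⟩
  · rintro ⟨n, h⟩
    exact ⟨n, (), Set.mem_univ _, (CentreAux.stage_iff_walks M n w).mpr h⟩
end
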